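/- Let n ≥ 1, p > 1 + 2/n, δ > 1, and fix x₀ ∈ ℝⁿ. Then there exists λ₀ > 0 such that for every 0 < λ ≤ λ₀ the following holds: for every measurable u₀ : ℝⁿ → ℝ with 0 ≤ u₀(x) ≤ (λ/2)·G_δ(x − x₀) for all x, and every measurable u : ℝⁿ × [0,∞) → ℝ with 0 ≤ u(y,s) ≤ λ·G_{s+δ}(y − x₀) for all (y,s), the function Tu(x,t) := ∫_{ℝⁿ} G_t(x − y)u₀(y) dy + ∫₀ᵗ ∫_{ℝⁿ} G_{t−s}(x − y)·u(y,s)^p dy ds satisfies 0 ≤ Tu(x,t) ≤ λ·G_{t+δ}(x − x₀) for all x ∈ ℝⁿ and t ≥ 0. (That is, the integral operator T maps the set S = { u : 0 ≤ u(x,t) ≤ λ G_{t+δ}(x−x₀) } into itself; note that p > 1 + 2/n guarantees ∫₀^∞ (4π(s+δ))^{−n(p−1)/2} ds < ∞.) -/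

import Mathlib

open MeasureTheory Real

/-- The Gaussian heat kernel on `ℝⁿ`: `G_t(x) = (4πt)^{-n/2} exp(-‖x‖²/(4t))`. -/
noncomputable def heatKernel (n : ℕ) (t : ℝ) (x : EuclideanSpace ℝ (Fin n)) : ℝ :=
  (4 * Real.pi * t) ^ (-(n : ℝ) / 2) * Real.exp (-‖x‖ ^ 2 / (4 * t))

/-- The integral operator `T` of the Duhamel formulation:
`Tu(x,t) = ∫ G_t(x-y) u₀(y) dy + ∫₀ᵗ ∫ G_{t-s}(x-y) u(y,s)^p dy ds`. -/
noncomputable def duhamelOp (n : ℕ) (p : ℝ) (u₀ : EuclideanSpace ℝ (Fin n) → ℝ)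
    (u : EuclideanSpace ℝ (Fin n) → ℝ → ℝ) (x : EuclideanSpace ℝ (Fin n)) (t : ℝ) : ℝ :=
  (∫ y, heatKernel n t (x - y) * u₀ y) +
    ∫ s in (0 : ℝ)..t, ∫ y, heatKernel n (t - s) (x - y) * u y s ^ p

section Aux
variable {n : ℕ}

lemma heatKernel_nonneg {t : ℝ} (ht : 0 ≤ t) (x : EuclideanSpace ℝ (Fin n)) :
    0 ≤ heatKernel n t x :=
  mul_nonneg (Real.rpow_nonneg (by positivity) _) (Real.exp_nonneg _)

lemma heatKernel_zero (hn : 1 ≤ n) (x : EuclideanSpace ℝ (Fin n)) :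
    heatKernel n 0 x = 0 := by
  have hn' : (n : ℝ) ≠ 0 := Nat.cast_ne_zero.mpr (by omega)
  unfold heatKernel
  rw [mul_zero, Real.zero_rpow (div_ne_zero (neg_ne_zero.mpr hn') two_ne_zero), zero_mul]

lemma exponent_identity {s t : ℝ} (hs : 0 < s) (ht : 0 < t)
    (a b : EuclideanSpace ℝ (Fin n)) :
    -‖a‖ ^ 2 / (4 * s) + -‖b‖ ^ 2 / (4 * t)
      = -‖a + b‖ ^ 2 / (4 * (s + t)) +
        -‖(t / (s + t)) • a - (s / (s + t)) • b‖ ^ 2 / (4 * (s * t / (s + t))) := by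
  have hst : 0 < s + t := by linarith
  have h1 : ‖a + b‖ ^ 2 = ‖a‖ ^ 2 + 2 * (inner ℝ a b : ℝ) + ‖b‖ ^ 2 := norm_add_sq_real a b
  have h2 : ‖(t / (s + t)) • a - (s / (s + t)) • b‖ ^ 2
      = (t / (s + t)) ^ 2 * ‖a‖ ^ 2 - 2 * (t / (s + t)) * (s / (s + t)) * (inner ℝ a b : ℝ)
        + (s / (s + t)) ^ 2 * ‖b‖ ^ 2 := by
    rw [← real_inner_self_eq_norm_sq]
    simp only [inner_sub_left, inner_sub_right, real_inner_smul_left, real_inner_smul_right,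
      real_inner_self_eq_norm_sq, real_inner_comm a b, norm_smul, Real.norm_eq_abs, mul_pow,
      sq_abs]
    ring
  rw [h1, h2]
  field_simp
  ring

lemma heatKernel_mul {s t : ℝ} (hs : 0 < s) (ht : 0 < t)
    (x z y : EuclideanSpace ℝ (Fin n)) :
    heatKernel n s (x - y) * heatKernel n t (y - z)
      = heatKernel n (s + t) (x - z) *
        heatKernel n (s * t / (s + t)) (y - ((t / (s + t)) • x + (s / (s + t)) • z)) := by
  have hst : 0 < s + t := by linarith
  have hr : 0 < s * t / (s + t) := by positivity
  unfold heatKernel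
  rw [mul_mul_mul_comm, mul_mul_mul_comm ((4 * Real.pi * (s + t)) ^ (-(n : ℝ) / 2))]
  congr 1
  · rw [← Real.mul_rpow (by positivity) (by positivity),
      ← Real.mul_rpow (by positivity) (by positivity)]
    congr 1
    field_simp
  · rw [← Real.exp_add, ← Real.exp_add]
    congr 1
    have hnorm : y - ((t / (s + t)) • x + (s / (s + t)) • z)
        = -((t / (s + t)) • (x - y) - (s / (s + t)) • (y - z)) := by
      match_scalars <;> field_simp <;> ring
    have hab : (x - y) + (y - z) = x - z := sub_add_sub_cancel x y z
    rw [hnorm, norm_neg, ← hab]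
    exact exponent_identity hs ht (x - y) (y - z)

lemma integrable_rexp_neg_mul_sq_norm' {b : ℝ} (hb : 0 < b) :
    Integrable (fun y : EuclideanSpace ℝ (Fin n) => Real.exp (-b * ‖y‖ ^ 2)) := by
  have h := (GaussianFourier.integrable_cexp_neg_mul_sq_norm_add
    (V := EuclideanSpace ℝ (Fin n)) (b := (b : ℂ)) (by simpa using hb) 0 0).norm
  refine h.congr (Filter.Eventually.of_forall fun y => ?_)
  simp only []
  rw [Complex.norm_exp]
  congr 1
  simp [pow_two, Complex.mul_re, Complex.add_re]

lemma integral_heatKernel {t : ℝ} (ht : 0 < t) (c : EuclideanSpace ℝ (Fin n)) :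
    ∫ y : EuclideanSpace ℝ (Fin n), heatKernel n t (y - c) = 1 := by
  rw [integral_sub_right_eq_self (fun y : EuclideanSpace ℝ (Fin n) => heatKernel n t y) c]
  unfold heatKernel
  rw [integral_const_mul]
  have hb : 0 < (4 * t)⁻¹ := by positivity
  have h1 : ∀ y : EuclideanSpace ℝ (Fin n),
      Real.exp (-‖y‖ ^ 2 / (4 * t)) = Real.exp (-(4 * t)⁻¹ * ‖y‖ ^ 2) := by
    intro y; congr 1; field_simp
  simp_rw [h1]
  rw [GaussianFourier.integral_rexp_neg_mul_sq_norm hb, finrank_euclideanSpace_fin]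
  have h2 : Real.pi / (4 * t)⁻¹ = 4 * Real.pi * t := by field_simp
  rw [h2, ← Real.rpow_add (by positivity),
    show -(n : ℝ) / 2 + (n : ℝ) / 2 = 0 by ring, Real.rpow_zero]

lemma integrable_heatKernel_sub {t : ℝ} (ht : 0 < t) (c : EuclideanSpace ℝ (Fin n)) :
    Integrable (fun y : EuclideanSpace ℝ (Fin n) => heatKernel n t (y - c)) := by
  unfold heatKernel
  have hb : 0 < (4 * t)⁻¹ := by positivity
  have h1 : ∀ y : EuclideanSpace ℝ (Fin n),
      Real.exp (-‖y - c‖ ^ 2 / (4 * t)) = Real.exp (-(4 * t)⁻¹ * ‖y - c‖ ^ 2) := by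
    intro y; congr 1; field_simp
  simp_rw [h1]
  exact ((integrable_rexp_neg_mul_sq_norm' hb).comp_sub_right c).const_mul _

lemma integrable_heatKernel_mul {s t : ℝ} (hs : 0 < s) (ht : 0 < t)
    (x z : EuclideanSpace ℝ (Fin n)) :
    Integrable (fun y : EuclideanSpace ℝ (Fin n) =>
      heatKernel n s (x - y) * heatKernel n t (y - z)) := by
  simp_rw [heatKernel_mul hs ht x z]
  exact (integrable_heatKernel_sub (by positivity) _).const_mul _

lemma integral_heatKernel_mul {s t : ℝ} (hs : 0 < s) (ht : 0 < t)
    (x z : EuclideanSpace ℝ (Fin n)) :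
    ∫ y : EuclideanSpace ℝ (Fin n), heatKernel n s (x - y) * heatKernel n t (y - z)
      = heatKernel n (s + t) (x - z) := by
  simp_rw [heatKernel_mul hs ht x z]
  rw [integral_const_mul, integral_heatKernel (by positivity), mul_one]

lemma measurable_heatKernel_prod :
    Measurable (fun q : ℝ × EuclideanSpace ℝ (Fin n) => heatKernel n q.1 q.2) := by
  unfold heatKernel
  measurability

lemma heatKernel_rpow_le {τ : ℝ} (hτ : 0 < τ) {p : ℝ} (hp : 1 ≤ p)
    (w : EuclideanSpace ℝ (Fin n)) :
    heatKernel n τ w ^ p ≤ (4 * Real.pi * τ) ^ (-(n : ℝ) * (p - 1) / 2) * heatKernel n τ w := by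
  have hb : 0 < 4 * Real.pi * τ := by positivity
  unfold heatKernel
  rw [Real.mul_rpow (Real.rpow_nonneg hb.le _) (Real.exp_nonneg _),
    ← Real.rpow_mul hb.le, ← Real.exp_mul,
    (show -(n : ℝ) / 2 * p = -(n : ℝ) * (p - 1) / 2 + -(n : ℝ) / 2 by ring),
    Real.rpow_add hb, mul_assoc]
  have h0 : 0 ≤ ‖w‖ ^ 2 / (4 * τ) := by positivity
  have h : -‖w‖ ^ 2 / (4 * τ) ≤ 0 := by rw [neg_div]; linarith
  have hq : -‖w‖ ^ 2 / (4 * τ) * p ≤ -‖w‖ ^ 2 / (4 * τ) := by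
    nlinarith [mul_nonneg (neg_nonneg.mpr h) (by linarith : (0:ℝ) ≤ p - 1)]
  exact mul_le_mul_of_nonneg_left (mul_le_mul_of_nonneg_left (Real.exp_le_exp.mpr hq)
    (Real.rpow_nonneg hb.le _)) (Real.rpow_nonneg hb.le _)

end Aux

open intervalIntegral

/-- For `p > 1 + 2/n` and `δ > 1`, there is `λ₀ > 0` such that for all `0 < λ ≤ λ₀`, the
operator `T` maps the set `S = {u : 0 ≤ u(x,t) ≤ λ G_{t+δ}(x - x₀)}` into itself, whenever
`0 ≤ u₀ ≤ (λ/2) G_δ(· - x₀)`. -/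
theorem duhamelOp_maps_S_into_S (n : ℕ) (hn : 1 ≤ n) (p δ : ℝ)
    (hp : 1 + 2 / (n : ℝ) < p) (hδ : 1 < δ) (x₀ : EuclideanSpace ℝ (Fin n)) :
    ∃ lam₀ : ℝ, 0 < lam₀ ∧
      ∀ lam : ℝ, 0 < lam → lam ≤ lam₀ →
        ∀ u₀ : EuclideanSpace ℝ (Fin n) → ℝ, Measurable u₀ →
          (∀ x, 0 ≤ u₀ x ∧ u₀ x ≤ lam / 2 * heatKernel n δ (x - x₀)) →
          ∀ u : EuclideanSpace ℝ (Fin n) → ℝ → ℝ,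
            Measurable (fun q : EuclideanSpace ℝ (Fin n) × ℝ => u q.1 q.2) →
            (∀ y, ∀ s : ℝ, 0 ≤ s →
              0 ≤ u y s ∧ u y s ≤ lam * heatKernel n (s + δ) (y - x₀)) →
            ∀ x, ∀ t : ℝ, 0 ≤ t →
              0 ≤ duhamelOp n p u₀ u x t ∧
                duhamelOp n p u₀ u x t ≤ lam * heatKernel n (t + δ) (x - x₀) := by
  have hn' : (0 : ℝ) < n := by exact_mod_cast Nat.pos_of_ne_zero (by omega)
  have hp1 : 1 < p := by
    have : 0 < 2 / (n : ℝ) := by positivity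
    linarith
  set κ : ℝ := (n : ℝ) * (p - 1) / 2 with hκdef
  have hκ : 1 < κ := by
    have h2 : 2 / (n : ℝ) < p - 1 := by linarith
    have h3 : 2 < (p - 1) * n := (div_lt_iff₀ hn').mp h2
    rw [hκdef]; nlinarith
  have hδ0 : 0 < δ := lt_trans one_pos hδ
  set C : ℝ := (4 * π) ^ (-κ) * (δ ^ (1 - κ) / (κ - 1)) with hCdef
  have hC0 : 0 ≤ C := by
    have := Real.rpow_nonneg (by positivity : (0:ℝ) ≤ 4 * π) (-κ)
    have := Real.rpow_nonneg hδ0.le (1 - κ)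
    have : (0:ℝ) < κ - 1 := by linarith
    positivity
  refine ⟨((2 * C + 1)⁻¹) ^ (p - 1)⁻¹, Real.rpow_pos_of_pos (by positivity) _, ?_⟩
  intro lam hlam hlamle u₀ hu₀m hu₀ u hum hu x t htpos
  have hG : 0 ≤ heatKernel n (t + δ) (x - x₀) := heatKernel_nonneg (by linarith) _
  -- the smallness of lam
  have hlamC : lam ^ (p - 1) * C ≤ 1 / 2 := by
    have hp1' : p - 1 ≠ 0 := by linarith
    have h1 : lam ^ (p - 1) ≤ (((2 * C + 1)⁻¹) ^ (p - 1)⁻¹) ^ (p - 1) :=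
      Real.rpow_le_rpow hlam.le hlamle (by linarith)
    rw [Real.rpow_inv_rpow (by positivity) hp1'] at h1
    have hpos : (0 : ℝ) < 2 * C + 1 := by linarith
    calc lam ^ (p - 1) * C ≤ (2 * C + 1)⁻¹ * C :=
          mul_le_mul_of_nonneg_right h1 hC0
      _ ≤ 1 / 2 := by
          rw [inv_mul_eq_div, div_le_div_iff₀ hpos two_pos]
          linarith
  -- first term
  have hA0 : 0 ≤ ∫ y, heatKernel n t (x - y) * u₀ y :=
    integral_nonneg fun y => mul_nonneg (heatKernel_nonneg htpos _) (hu₀ y).1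
  have hA : (∫ y, heatKernel n t (x - y) * u₀ y)
      ≤ lam / 2 * heatKernel n (t + δ) (x - x₀) := by
    rcases eq_or_lt_of_le htpos with h0 | htpos'
    · have : ∀ y, heatKernel n t (x - y) * u₀ y = 0 := by
        intro y; rw [← h0, heatKernel_zero hn, zero_mul]
      simp only [this, MeasureTheory.integral_zero]
      exact mul_nonneg (by positivity) hG
    · have hint : Integrable (fun y : EuclideanSpace ℝ (Fin n) =>
          lam / 2 * (heatKernel n t (x - y) * heatKernel n δ (y - x₀))) :=
        (integrable_heatKernel_mul htpos' hδ0 x x₀).const_mul _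
      have hmono := integral_mono_of_nonneg
        (Filter.Eventually.of_forall fun y =>
          mul_nonneg (heatKernel_nonneg htpos (x - y)) (hu₀ y).1)
        hint
        (Filter.Eventually.of_forall fun y => by
          calc heatKernel n t (x - y) * u₀ y
              ≤ heatKernel n t (x - y) * (lam / 2 * heatKernel n δ (y - x₀)) :=
                mul_le_mul_of_nonneg_left (hu₀ y).2 (heatKernel_nonneg htpos _)
            _ = lam / 2 * (heatKernel n t (x - y) * heatKernel n δ (y - x₀)) := by ring)
      calc (∫ y, heatKernel n t (x - y) * u₀ y)
          ≤ ∫ y, lam / 2 * (heatKernel n t (x - y) * heatKernel n δ (y - x₀)) := hmono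
        _ = lam / 2 * ∫ y, heatKernel n t (x - y) * heatKernel n δ (y - x₀) :=
            integral_const_mul _ _
        _ = lam / 2 * heatKernel n (t + δ) (x - x₀) := by
            rw [integral_heatKernel_mul htpos' hδ0 x x₀]
  -- second term : pointwise-in-time facts
  have hF0 : ∀ s ∈ Set.Icc (0:ℝ) t, 0 ≤ ∫ y, heatKernel n (t - s) (x - y) * u y s ^ p := by
    intro s hs
    exact integral_nonneg fun y => mul_nonneg
      (heatKernel_nonneg (by linarith [hs.2]) _) (Real.rpow_nonneg (hu y s hs.1).1 p)
  have hFle : ∀ s ∈ Set.Icc (0:ℝ) t, (∫ y, heatKernel n (t - s) (x - y) * u y s ^ p)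
      ≤ lam ^ p * (4 * π) ^ (-κ) * heatKernel n (t + δ) (x - x₀) * (s + δ) ^ (-κ) := by
    intro s hs
    have hsδ : 0 < s + δ := by linarith [hs.1]
    have hRHS0 : 0 ≤ lam ^ p * (4 * π) ^ (-κ) * heatKernel n (t + δ) (x - x₀)
        * (s + δ) ^ (-κ) := by
      have h1 := Real.rpow_nonneg (le_of_lt hlam) p
      have h2 := Real.rpow_nonneg (by positivity : (0:ℝ) ≤ 4 * π) (-κ)
      have h3 := Real.rpow_nonneg hsδ.le (-κ)
      positivity
    rcases eq_or_lt_of_le hs.2 with hst | hst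
    · have : ∀ y, heatKernel n (t - s) (x - y) * u y s ^ p = 0 := by
        intro y; rw [hst, sub_self, heatKernel_zero hn, zero_mul]
      simp only [this, MeasureTheory.integral_zero]
      exact hRHS0
    · have hts : 0 < t - s := by linarith
      set c : ℝ := lam ^ p * ((4 * π) ^ (-κ) * (s + δ) ^ (-κ)) with hcdef
      have hc0 : 0 ≤ c := by
        have h1 := Real.rpow_nonneg (le_of_lt hlam) p
        have h2 := Real.rpow_nonneg (by positivity : (0:ℝ) ≤ 4 * π) (-κ)
        have h3 := Real.rpow_nonneg hsδ.le (-κ)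
        positivity
      have key : ∀ y, heatKernel n (t - s) (x - y) * u y s ^ p
          ≤ c * (heatKernel n (t - s) (x - y) * heatKernel n (s + δ) (y - x₀)) := by
        intro y
        have hK0 : 0 ≤ heatKernel n (t - s) (x - y) := heatKernel_nonneg hts.le _
        have hH0 : 0 ≤ heatKernel n (s + δ) (y - x₀) := heatKernel_nonneg hsδ.le _
        have h1 : u y s ^ p ≤ (lam * heatKernel n (s + δ) (y - x₀)) ^ p :=
          Real.rpow_le_rpow (hu y s hs.1).1 (hu y s hs.1).2 (by linarith)
        have h2 : (lam * heatKernel n (s + δ) (y - x₀)) ^ p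
            = lam ^ p * heatKernel n (s + δ) (y - x₀) ^ p :=
          Real.mul_rpow hlam.le hH0
        have h3 : heatKernel n (s + δ) (y - x₀) ^ p
            ≤ (4 * π * (s + δ)) ^ (-(n:ℝ) * (p - 1) / 2) * heatKernel n (s + δ) (y - x₀) :=
          heatKernel_rpow_le hsδ hp1.le _
        have hexp : -(n:ℝ) * (p - 1) / 2 = -κ := by rw [hκdef]; ring
        have h4 : (4 * π * (s + δ)) ^ (-(n:ℝ) * (p - 1) / 2)
            = (4 * π) ^ (-κ) * (s + δ) ^ (-κ) := by
          rw [hexp, Real.mul_rpow (by positivity) hsδ.le]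
        calc heatKernel n (t - s) (x - y) * u y s ^ p
            ≤ heatKernel n (t - s) (x - y)
              * (lam ^ p * ((4 * π) ^ (-κ) * (s + δ) ^ (-κ) * heatKernel n (s + δ) (y - x₀))) := by
              apply mul_le_mul_of_nonneg_left _ hK0
              calc u y s ^ p ≤ lam ^ p * heatKernel n (s + δ) (y - x₀) ^ p := by
                    rw [← h2]; exact h1
                _ ≤ lam ^ p * ((4 * π) ^ (-κ) * (s + δ) ^ (-κ) * heatKernel n (s + δ) (y - x₀)) := by
                    apply mul_le_mul_of_nonneg_left _ (Real.rpow_nonneg hlam.le p)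
                    rw [← h4]; exact h3
          _ = c * (heatKernel n (t - s) (x - y) * heatKernel n (s + δ) (y - x₀)) := by
              rw [hcdef]; ring
      have hint : Integrable (fun y : EuclideanSpace ℝ (Fin n) =>
          c * (heatKernel n (t - s) (x - y) * heatKernel n (s + δ) (y - x₀))) :=
        (integrable_heatKernel_mul hts hsδ x x₀).const_mul _
      have hmono := integral_mono_of_nonneg
        (Filter.Eventually.of_forall fun y => mul_nonneg (heatKernel_nonneg hts.le _)
          (Real.rpow_nonneg (hu y s hs.1).1 p))
        hint (Filter.Eventually.of_forall key)
      calc (∫ y, heatKernel n (t - s) (x - y) * u y s ^ p)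
          ≤ ∫ y, c * (heatKernel n (t - s) (x - y) * heatKernel n (s + δ) (y - x₀)) := hmono
        _ = c * heatKernel n ((t - s) + (s + δ)) (x - x₀) := by
            rw [MeasureTheory.integral_const_mul, integral_heatKernel_mul hts hsδ x x₀]
        _ = lam ^ p * (4 * π) ^ (-κ) * heatKernel n (t + δ) (x - x₀) * (s + δ) ^ (-κ) := by
            rw [hcdef, show t - s + (s + δ) = t + δ by ring]; ring
  -- integrability in time
  have hFmeas : StronglyMeasurable
      (fun s : ℝ => ∫ y, heatKernel n (t - s) (x - y) * u y s ^ p) := by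
    apply StronglyMeasurable.integral_prod_right'
      (f := fun q : ℝ × EuclideanSpace ℝ (Fin n) =>
        heatKernel n (t - q.1) (x - q.2) * u q.2 q.1 ^ p)
    apply Measurable.stronglyMeasurable
    apply Measurable.mul
    · exact measurable_heatKernel_prod.comp
        ((measurable_const.sub measurable_fst).prodMk (measurable_const.sub measurable_snd))
    · have h1 : Measurable fun q : ℝ × EuclideanSpace ℝ (Fin n) => u q.2 q.1 :=
        hum.comp (measurable_snd.prodMk measurable_fst)
      exact (Real.continuous_rpow_const (by linarith : (0:ℝ) ≤ p)).measurable.comp h1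
  set M : ℝ := lam ^ p * (4 * π) ^ (-κ) * heatKernel n (t + δ) (x - x₀) * δ ^ (-κ) with hMdef
  have hFint : IntervalIntegrable
      (fun s : ℝ => ∫ y, heatKernel n (t - s) (x - y) * u y s ^ p) volume 0 t := by
    rw [intervalIntegrable_iff_integrableOn_Ioc_of_le htpos]
    apply Integrable.mono' (integrable_const M) hFmeas.aestronglyMeasurable.restrict
    refine (ae_restrict_iff' measurableSet_Ioc).mpr (Filter.Eventually.of_forall fun s hs => ?_)
    have hs' : s ∈ Set.Icc (0:ℝ) t := Set.Ioc_subset_Icc_self hs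
    rw [Real.norm_eq_abs, abs_of_nonneg (hF0 s hs')]
    calc (∫ y, heatKernel n (t - s) (x - y) * u y s ^ p)
        ≤ lam ^ p * (4 * π) ^ (-κ) * heatKernel n (t + δ) (x - x₀) * (s + δ) ^ (-κ) :=
          hFle s hs'
      _ ≤ M := by
          rw [hMdef]
          have h1 : (s + δ) ^ (-κ) ≤ δ ^ (-κ) :=
            Real.rpow_le_rpow_of_nonpos hδ0 (by linarith [hs'.1]) (by linarith)
          have h2 : 0 ≤ lam ^ p * (4 * π) ^ (-κ) * heatKernel n (t + δ) (x - x₀) := by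
            have := Real.rpow_nonneg (le_of_lt hlam) p
            have := Real.rpow_nonneg (by positivity : (0:ℝ) ≤ 4 * π) (-κ)
            positivity
          exact mul_le_mul_of_nonneg_left h1 h2
  have hgint : IntervalIntegrable (fun s : ℝ =>
      lam ^ p * (4 * π) ^ (-κ) * heatKernel n (t + δ) (x - x₀) * (s + δ) ^ (-κ)) volume 0 t := by
    apply ContinuousOn.intervalIntegrable
    apply ContinuousOn.mul continuousOn_const
    apply ContinuousOn.rpow_const (continuousOn_id.add continuousOn_const)
    intro s hs
    rw [Set.uIcc_of_le htpos] at hs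
    exact Or.inl (by intro h; simp only [Pi.add_apply, id_eq] at h; nlinarith [hs.1, hδ0])
  have hB0 : 0 ≤ ∫ s in (0:ℝ)..t, ∫ y, heatKernel n (t - s) (x - y) * u y s ^ p :=
    intervalIntegral.integral_nonneg htpos fun s hs => hF0 s hs
  have hIκ : (∫ s in (0:ℝ)..t, (s + δ) ^ (-κ)) ≤ δ ^ (1 - κ) / (κ - 1) := by
    have h1 : (∫ s in (0:ℝ)..t, (s + δ) ^ (-κ)) = ∫ s in δ..(t + δ), s ^ (-κ) := by
      have := intervalIntegral.integral_comp_add_right (a := (0:ℝ)) (b := t)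
        (fun s => s ^ (-κ)) δ
      rwa [zero_add] at this
    have h0 : (0:ℝ) ∉ Set.uIcc δ (t + δ) := by
      rw [Set.uIcc_of_le (by linarith)]
      intro h
      exact absurd h.1 (by linarith)
    rw [h1, integral_rpow (Or.inr ⟨by linarith, h0⟩),
      show -κ + 1 = 1 - κ by ring]
    have hA : 0 ≤ (t + δ) ^ (1 - κ) := Real.rpow_nonneg (by linarith) _
    have heq : ((t + δ) ^ (1 - κ) - δ ^ (1 - κ)) / (1 - κ)
        = (δ ^ (1 - κ) - (t + δ) ^ (1 - κ)) / (κ - 1) := by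
      rw [show (1:ℝ) - κ = -(κ - 1) by ring, div_neg]
      ring
    rw [heq]
    have hd : (0:ℝ) < κ - 1 := by linarith
    exact (div_le_div_iff_of_pos_right hd).mpr (by linarith)
  have hprefac : 0 ≤ lam ^ p * (4 * π) ^ (-κ) * heatKernel n (t + δ) (x - x₀) := by
    have h1 := Real.rpow_nonneg (le_of_lt hlam) p
    have h2 := Real.rpow_nonneg (by positivity : (0:ℝ) ≤ 4 * π) (-κ)
    positivity
  have hBle : (∫ s in (0:ℝ)..t, ∫ y, heatKernel n (t - s) (x - y) * u y s ^ p)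
      ≤ lam ^ p * (4 * π) ^ (-κ) * heatKernel n (t + δ) (x - x₀) * (δ ^ (1 - κ) / (κ - 1)) := by
    calc (∫ s in (0:ℝ)..t, ∫ y, heatKernel n (t - s) (x - y) * u y s ^ p)
        ≤ ∫ s in (0:ℝ)..t,
            lam ^ p * (4 * π) ^ (-κ) * heatKernel n (t + δ) (x - x₀) * (s + δ) ^ (-κ) :=
          intervalIntegral.integral_mono_on htpos hFint hgint hFle
      _ = lam ^ p * (4 * π) ^ (-κ) * heatKernel n (t + δ) (x - x₀)
            * ∫ s in (0:ℝ)..t, (s + δ) ^ (-κ) := by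
          rw [← intervalIntegral.integral_const_mul]
      _ ≤ lam ^ p * (4 * π) ^ (-κ) * heatKernel n (t + δ) (x - x₀)
            * (δ ^ (1 - κ) / (κ - 1)) :=
          mul_le_mul_of_nonneg_left hIκ hprefac
  have hlp : lam ^ p = lam ^ (p - 1) * lam := by
    nth_rewrite 1 [show p = p - 1 + 1 by ring]
    rw [Real.rpow_add hlam, Real.rpow_one]
  have hTu : duhamelOp n p u₀ u x t = (∫ y, heatKernel n t (x - y) * u₀ y)
      + ∫ s in (0:ℝ)..t, ∫ y, heatKernel n (t - s) (x - y) * u y s ^ p := rfl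
  constructor
  · rw [hTu]; exact add_nonneg hA0 hB0
  · rw [hTu]
    calc (∫ y, heatKernel n t (x - y) * u₀ y)
          + (∫ s in (0:ℝ)..t, ∫ y, heatKernel n (t - s) (x - y) * u y s ^ p)
        ≤ lam / 2 * heatKernel n (t + δ) (x - x₀)
          + lam ^ p * (4 * π) ^ (-κ) * heatKernel n (t + δ) (x - x₀)
            * (δ ^ (1 - κ) / (κ - 1)) := add_le_add hA hBle
      _ = lam / 2 * heatKernel n (t + δ) (x - x₀)
          + lam * (lam ^ (p - 1) * C) * heatKernel n (t + δ) (x - x₀) := by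
          rw [hlp, hCdef]; ring
      _ ≤ lam / 2 * heatKernel n (t + δ) (x - x₀)
          + lam * (1 / 2) * heatKernel n (t + δ) (x - x₀) := by
          have h := mul_le_mul_of_nonneg_right
            (mul_le_mul_of_nonneg_left hlamC hlam.le) hG
          linarith
      _ = lam * heatKernel n (t + δ) (x - x₀) := by ring
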